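/- arXiv:0706.1484 — 2 statements merged into one kernel-verified Lean document; each statement's English description precedes it below -/
import Mathlib

section
/- For closed subspaces M, N of a Hilbert space, the Friedrichs angle cosine satisfies c[M,N] = ‖P_M P_N − P_{M∩N}‖, where P denotes orthogonal projection. -/
noncomputable section

open scoped InnerProductSpace ENNReal

variable {H K : Type*} [NormedAddCommGroup H] [InnerProductSpace ℂ H] [CompleteSpace H]
  [NormedAddCommGroup K] [InnerProductSpace ℂ K] [CompleteSpace K]

/-- Orthogonal projection onto (the closure of) a subspace, as an operator `H →L[ℂ] H`. -/
def sproj (M : Submodule ℂ H) : H →L[ℂ] H :=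
  M.topologicalClosure.subtypeL ∘L M.topologicalClosure.orthogonalProjectionOnto

/-- The reduced minimum modulus of a bounded operator. -/
def gammaRMM (T : H →L[ℂ] K) : ℝ :=
  sInf ((fun x => ‖T x‖) '' {x : H | x ∈ (LinearMap.ker (T : H →ₗ[ℂ] K))ᗮ ∧ ‖x‖ = 1})

/-- `M ⊖ N`. -/
def ominus (M N : Submodule ℂ H) : Submodule ℂ H := M ⊓ (M ⊓ N)ᗮ

open Classical in
/-- The cosine of the Friedrichs angle between two subspaces. -/
def angleCos (M N : Submodule ℂ H) : ℝ :=
  if M ≤ N ∨ N ≤ M then 0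
  else sSup {r : ℝ | ∃ x ∈ ominus M N, ∃ y ∈ ominus N M,
    ‖x‖ = 1 ∧ ‖y‖ = 1 ∧ r = ‖(inner ℂ x y : ℂ)‖}

/-- The sine of the Friedrichs angle. -/
def angleSin (M N : Submodule ℂ H) : ℝ := Real.sqrt (1 - angleCos M N ^ 2)

variable {I : Type*}

/-- `(w i, W i)` is a fusion frame (frame of subspaces) with bounds `A`, `B`. -/
def IsFusionFrameWith (w : I → ℝ) (W : I → Submodule ℂ H) (A B : ℝ) : Prop :=
  0 < A ∧ 0 < B ∧ (∀ i, IsClosed (W i : Set H)) ∧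
    ∀ f : H, A * ‖f‖ ^ 2 ≤ ∑' i, w i ^ 2 * ‖sproj (W i) f‖ ^ 2 ∧
      ∑' i, w i ^ 2 * ‖sproj (W i) f‖ ^ 2 ≤ B * ‖f‖ ^ 2

/-- `(w i, W i)` is a fusion frame for some bounds. -/
def IsFusionFrame (w : I → ℝ) (W : I → Submodule ℂ H) : Prop :=
  ∃ A B : ℝ, IsFusionFrameWith w W A B

/-- a family of mutually orthogonal closed subspaces with dense span. -/
def IsOBS (E : I → Submodule ℂ H) : Prop :=
  (∀ i, IsClosed (E i : Set H)) ∧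
  (∀ i j, i ≠ j → ∀ x ∈ E i, ∀ y ∈ E j, (inner ℂ x y : ℂ) = 0) ∧
  (⨆ i, E i).topologicalClosure = ⊤

/-- A minimal sequence of subspaces. -/
def IsMinimal (W : I → Submodule ℂ H) : Prop :=
  ∀ i, W i ⊓ (⨆ j ∈ {j : I | j ≠ i}, W j).topologicalClosure = ⊥

/-- The kernel of the synthesis operator of `(w i, W i)`, as a subspace of `⊕₂ W i`. -/
def synthesisKernel (w : I → ℝ) (W : I → Submodule ℂ H) :
    Submodule ℂ (lp (fun i => W i) 2) where
  carrier := {g | ∀ f : H, HasSum (fun i => (w i : ℂ) * (inner ℂ ((g i : H)) f : ℂ)) 0}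
  zero_mem' := by
    intro f
    have : (fun i => (w i : ℂ) * (inner ℂ (((0 : lp (fun i => W i) 2) i : H)) f : ℂ)) =
        fun _ => 0 := by
      funext i; simp [lp.coeFn_zero]
    rw [this]; exact hasSum_zero
  add_mem' := by
    intro a b ha hb f
    have h := (ha f).add (hb f)
    rw [add_zero] at h
    have he : (fun i => (w i : ℂ) * (inner ℂ (((a + b) i : H)) f : ℂ)) =
        fun i => (w i : ℂ) * (inner ℂ ((a i : H)) f : ℂ) +
          (w i : ℂ) * (inner ℂ ((b i : H)) f : ℂ) := by
      funext i
      have h2 : ((a + b) i : ↥(W i)) = a i + b i := by rw [lp.coeFn_add]; rfl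
      rw [h2, Submodule.coe_add, inner_add_left]; ring
    rw [he]; exact h
  smul_mem' := by
    intro c a ha f
    have h := (ha f).mul_left (starRingEnd ℂ c)
    rw [mul_zero] at h
    have he : (fun i => (w i : ℂ) * (inner ℂ (((c • a) i : H)) f : ℂ)) =
        fun i => (starRingEnd ℂ c) * ((w i : ℂ) * (inner ℂ ((a i : H)) f : ℂ)) := by
      funext i
      have h2 : ((c • a) i : ↥(W i)) = c • a i := by rw [lp.coeFn_smul]; rfl
      rw [h2, Submodule.coe_smul, inner_smul_left]; ring
    rw [he]; exact h

/-- The excess of a fusion frame. -/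
def fusionExcess (w : I → ℝ) (W : I → Submodule ℂ H) : Cardinal :=
  Module.rank ℂ (synthesisKernel w W)



section Helpers

local notation "⟪" x ", " y "⟫" => @inner ℂ _ _ x y

/-- Characterization of `sproj` for closed subspaces. -/
lemma sproj_eq_of {M : Submodule ℂ H} (hM : IsClosed (M : Set H)) {x v : H}
    (hv : v ∈ M) (hvo : x - v ∈ Mᗮ) : sproj M x = v := by
  have h : M.topologicalClosure = M := hM.submodule_topologicalClosure_eq
  refine Submodule.eq_starProjection_of_mem_orthogonal ?_ ?_
  · rw [h]; exact hv
  · rw [h]; exact hvo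

lemma sproj_mem {M : Submodule ℂ H} (hM : IsClosed (M : Set H)) (x : H) :
    sproj M x ∈ M := by
  have h : M.topologicalClosure = M := hM.submodule_topologicalClosure_eq
  have hmem : sproj M x ∈ M.topologicalClosure :=
    (M.topologicalClosure.orthogonalProjectionOnto x).2
  rwa [h] at hmem

lemma sub_sproj_mem {M : Submodule ℂ H} (hM : IsClosed (M : Set H)) (x : H) :
    x - sproj M x ∈ Mᗮ := by
  have h : M.topologicalClosure = M := hM.submodule_topologicalClosure_eq
  have hmem : x - sproj M x ∈ M.topologicalClosureᗮ :=
    Submodule.sub_starProjection_mem_orthogonal (K := M.topologicalClosure) x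
  rwa [h] at hmem

lemma sproj_eq_self {M : Submodule ℂ H} (hM : IsClosed (M : Set H)) {x : H}
    (hx : x ∈ M) : sproj M x = x :=
  sproj_eq_of hM hx (by simpa using Submodule.zero_mem Mᗮ)

lemma sproj_inner (M : Submodule ℂ H) (x y : H) :
    ⟪sproj M x, y⟫ = ⟪x, sproj M y⟫ :=
  Submodule.inner_starProjection_left_eq_right M.topologicalClosure x y

lemma norm_sproj_le (M : Submodule ℂ H) (x : H) : ‖sproj M x‖ ≤ ‖x‖ := by
  have h1 : ‖sproj M x‖ = ‖M.topologicalClosure.orthogonalProjectionOnto x‖ := rfl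
  rw [h1]
  calc ‖M.topologicalClosure.orthogonalProjectionOnto x‖
      ≤ ‖M.topologicalClosure.orthogonalProjectionOnto‖ * ‖x‖ :=
        (M.topologicalClosure.orthogonalProjectionOnto).le_opNorm x
    _ ≤ 1 * ‖x‖ :=
        mul_le_mul_of_nonneg_right (Submodule.orthogonalProjectionOnto_norm_le _) (norm_nonneg x)
    _ = ‖x‖ := one_mul _

lemma isClosed_inf_orth (U V : Submodule ℂ H) (hV : IsClosed (V : Set H)) :
    IsClosed ((V ⊓ Uᗮ : Submodule ℂ H) : Set H) := by
  rw [Submodule.coe_inf]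
  exact hV.inter (Submodule.isClosed_orthogonal U)

lemma isClosed_inf {U V : Submodule ℂ H} (hU : IsClosed (U : Set H))
    (hV : IsClosed (V : Set H)) : IsClosed ((U ⊓ V : Submodule ℂ H) : Set H) := by
  rw [Submodule.coe_inf]
  exact hU.inter hV

lemma sproj_sproj_of_le {U V : Submodule ℂ H} (hU : IsClosed (U : Set H))
    (hV : IsClosed (V : Set H)) (hUV : U ≤ V) (x : H) :
    sproj U (sproj V x) = sproj U x := by
  refine sproj_eq_of hU (sproj_mem hU x) ?_
  have h1 : sproj V x - x ∈ Vᗮ := by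
    have := Submodule.neg_mem Vᗮ (sub_sproj_mem hV x)
    rwa [neg_sub] at this
  have h2 : sproj V x - x ∈ Uᗮ := Submodule.orthogonal_le hUV h1
  have h3 : x - sproj U x ∈ Uᗮ := sub_sproj_mem hU x
  have := Submodule.add_mem Uᗮ h2 h3
  rwa [sub_add_sub_cancel] at this

lemma sproj_eq_zero_of_orthogonal {M : Submodule ℂ H} (hM : IsClosed (M : Set H))
    {x : H} (hx : x ∈ Mᗮ) : sproj M x = 0 :=
  sproj_eq_of hM (Submodule.zero_mem M) (by simpa using hx)

/-- Orthogonal decomposition of the projection: if `U ≤ V` then `P_V = P_U + P_{V ⊓ Uᗮ}`. -/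
lemma sproj_add {U V : Submodule ℂ H} (hU : IsClosed (U : Set H))
    (hV : IsClosed (V : Set H)) (hUV : U ≤ V) (x : H) :
    sproj V x = sproj U x + sproj (V ⊓ Uᗮ) x := by
  set W := V ⊓ Uᗮ with hWdef
  have hW : IsClosed (W : Set H) := isClosed_inf_orth U V hV
  set a := sproj U x with hadef
  set b := sproj W x with hbdef
  have haU : a ∈ U := sproj_mem hU x
  have hbW : b ∈ W := sproj_mem hW x
  have hbU : b ∈ Uᗮ := hbW.2
  have haW : a ∈ Wᗮ :=
    (le_trans (Submodule.le_orthogonal_orthogonal U)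
      (Submodule.orthogonal_le inf_le_right)) haU
  have h1 : x - (a + b) ∈ Uᗮ := by
    have := Submodule.sub_mem Uᗮ (sub_sproj_mem hU x) hbU
    rwa [sub_sub] at this
  have h2 : x - (a + b) ∈ Wᗮ := by
    have := Submodule.sub_mem Wᗮ (sub_sproj_mem hW x) haW
    rw [sub_sub, add_comm b a] at this
    exact this
  refine sproj_eq_of hV (Submodule.add_mem V (hUV haU) hbW.1) ?_
  refine (Submodule.mem_orthogonal' V _).2 fun z hz => ?_
  have hwz : z - sproj U z ∈ W := ⟨Submodule.sub_mem V hz (hUV (sproj_mem hU z)),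
    sub_sproj_mem hU z⟩
  have hcalc : ⟪x - (a + b), z⟫
      = ⟪x - (a + b), sproj U z⟫ + ⟪x - (a + b), z - sproj U z⟫ := by
    rw [← inner_add_right, add_sub_cancel]
  rw [hcalc, (Submodule.mem_orthogonal' U _).1 h1 _ (sproj_mem hU z),
    (Submodule.mem_orthogonal' W _).1 h2 _ hwz, add_zero]

lemma ominus_ne_bot' {M N : Submodule ℂ H} (hM : IsClosed (M : Set H))
    (hN : IsClosed (N : Set H)) (h : ¬M ≤ N) : M ⊓ (M ⊓ N)ᗮ ≠ ⊥ := by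
  have hMN : IsClosed ((M ⊓ N : Submodule ℂ H) : Set H) := isClosed_inf hM hN
  obtain ⟨m, hmM, hmN⟩ := SetLike.not_le_iff_exists.1 h
  refine (Submodule.ne_bot_iff _).2 ⟨m - sproj (M ⊓ N) m,
    ⟨Submodule.sub_mem M hmM ((inf_le_left : M ⊓ N ≤ M) (sproj_mem hMN m)),
      sub_sproj_mem hMN m⟩, ?_⟩
  intro h0
  have hm : m = sproj (M ⊓ N) m := sub_eq_zero.1 h0
  have hmem : m ∈ M ⊓ N := by rw [hm]; exact sproj_mem hMN m
  exact hmN hmem.2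

/-- Norm of the composition of two projections as a supremum of inner products. -/
lemma norm_sproj_comp {A B : Submodule ℂ H} (hA : IsClosed (A : Set H))
    (hB : IsClosed (B : Set H)) (hAne : A ≠ ⊥) (hBne : B ≠ ⊥) :
    sSup {r : ℝ | ∃ x ∈ A, ∃ y ∈ B, ‖x‖ = 1 ∧ ‖y‖ = 1 ∧ r = ‖(inner ℂ x y : ℂ)‖}
      = ‖sproj A ∘L sproj B‖ := by
  set T := sproj A ∘L sproj B with hT
  set S := {r : ℝ | ∃ x ∈ A, ∃ y ∈ B, ‖x‖ = 1 ∧ ‖y‖ = 1 ∧ r = ‖(inner ℂ x y : ℂ)‖}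
    with hSdef
  have hSle : ∀ r ∈ S, r ≤ ‖T‖ := by
    rintro r ⟨x, hx, y, hy, hx1, hy1, rfl⟩
    have key : ⟪x, y⟫ = ⟪x, sproj A (sproj B y)⟫ := by
      rw [← sproj_inner A x (sproj B y), sproj_eq_self hA hx, sproj_eq_self hB hy]
    calc ‖⟪x, y⟫‖ = ‖⟪x, sproj A (sproj B y)⟫‖ := by rw [key]
      _ ≤ ‖x‖ * ‖sproj A (sproj B y)‖ := norm_inner_le_norm _ _
      _ = ‖T y‖ := by rw [hx1, one_mul]; rfl
      _ ≤ ‖T‖ * ‖y‖ := T.le_opNorm y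
      _ = ‖T‖ := by rw [hy1, mul_one]
  have hbdd : BddAbove S := ⟨‖T‖, hSle⟩
  have hunit : ∀ c : H, c ≠ 0 → ‖((‖c‖⁻¹ : ℝ) : ℂ) • c‖ = 1 := by
    intro c hc
    rw [norm_smul, Complex.norm_real, Real.norm_eq_abs, abs_inv, abs_norm,
      inv_mul_cancel₀ (norm_ne_zero_iff.2 hc)]
  have hmemS : ∀ x, x ∈ A → ∀ y, y ∈ B → x ≠ 0 → y ≠ 0 →
      ‖⟪((‖x‖⁻¹ : ℝ) : ℂ) • x, ((‖y‖⁻¹ : ℝ) : ℂ) • y⟫‖ ∈ S := by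
    intro x hx y hy hx0 hy0
    exact ⟨_, A.smul_mem _ hx, _, B.smul_mem _ hy, hunit x hx0, hunit y hy0, rfl⟩
  obtain ⟨a, haA, ha0⟩ := (Submodule.ne_bot_iff _).1 hAne
  obtain ⟨b, hbB, hb0⟩ := (Submodule.ne_bot_iff _).1 hBne
  have hne : S.Nonempty := ⟨_, hmemS a haA b hbB ha0 hb0⟩
  have hs0 : 0 ≤ sSup S :=
    le_trans (norm_nonneg _) (le_csSup hbdd (hmemS a haA b hbB ha0 hb0))
  refine le_antisymm (csSup_le hne hSle) ?_
  refine T.opNorm_le_bound hs0 fun y0 => ?_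
  set c := sproj B y0 with hcdef
  set u := sproj A c with hudef
  have hTy : T y0 = u := rfl
  by_cases hu : u = 0
  · rw [hTy, hu, norm_zero]
    exact mul_nonneg hs0 (norm_nonneg _)
  have hc0 : c ≠ 0 := by
    intro h
    exact hu (by rw [hudef, h, map_zero])
  have huA : u ∈ A := sproj_mem hA c
  have hcB : c ∈ B := sproj_mem hB y0
  have key : ⟪u, c⟫ = ((‖u‖ : ℂ)) ^ 2 := by
    have h1 : ⟪u, u⟫ = ⟪u, c⟫ := by
      nth_rewrite 2 [hudef]
      rw [← sproj_inner A u c, sproj_eq_self hA huA]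
    rw [← h1, inner_self_eq_norm_sq_to_K]
    norm_cast
  have hnu : ‖u‖ ≠ 0 := norm_ne_zero_iff.2 hu
  have hnc : ‖c‖ ≠ 0 := norm_ne_zero_iff.2 hc0
  have hval : ‖⟪((‖u‖⁻¹ : ℝ) : ℂ) • u, ((‖c‖⁻¹ : ℝ) : ℂ) • c⟫‖ = ‖u‖ / ‖c‖ := by
    rw [inner_smul_left, inner_smul_right, key, Complex.conj_ofReal]
    simp only [norm_mul, norm_pow, Complex.norm_real, Real.norm_eq_abs, abs_inv, abs_norm]
    field_simp
  have hdiv : ‖u‖ / ‖c‖ ≤ sSup S :=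
    hval ▸ le_csSup hbdd (hmemS u huA c hcB hu hc0)
  have hcpos : 0 < ‖c‖ := norm_pos_iff.2 hc0
  have h5 : ‖u‖ ≤ sSup S * ‖c‖ := (div_le_iff₀ hcpos).1 hdiv
  calc ‖T y0‖ = ‖u‖ := by rw [hTy]
    _ ≤ sSup S * ‖c‖ := h5
    _ ≤ sSup S * ‖y0‖ := mul_le_mul_of_nonneg_left (norm_sproj_le B y0) hs0

end Helpers

theorem angleCos_eq_norm_proj_comp (M N : Submodule ℂ H)
    (hM : IsClosed (M : Set H)) (hN : IsClosed (N : Set H)) :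
    angleCos M N = ‖sproj M ∘L sproj N - sproj (M ⊓ N)‖ := by
  classical
  have hMNc : IsClosed ((M ⊓ N : Submodule ℂ H) : Set H) := isClosed_inf hM hN
  rw [angleCos]
  by_cases hle : M ≤ N ∨ N ≤ M
  · rw [if_pos hle]
    have hT : sproj M ∘L sproj N - sproj (M ⊓ N) = 0 := by
      ext x
      simp only [ContinuousLinearMap.coe_sub', Pi.sub_apply,
        ContinuousLinearMap.coe_comp', Function.comp_apply,
        ContinuousLinearMap.zero_apply, sub_eq_zero]
      rcases hle with h | h
      · rw [inf_eq_left.2 h, sproj_sproj_of_le hM hN h]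
      · rw [inf_eq_right.2 h, sproj_eq_self hM (h (sproj_mem hN x))]
    rw [hT, norm_zero]
  · rw [if_neg hle]
    push_neg at hle
    obtain ⟨hMN', hNM'⟩ := hle
    have hBeq : ominus N M = N ⊓ (M ⊓ N)ᗮ := by
      show N ⊓ (N ⊓ M)ᗮ = N ⊓ (M ⊓ N)ᗮ
      rw [inf_comm N M]
    have hA : IsClosed ((ominus M N : Submodule ℂ H) : Set H) :=
      isClosed_inf_orth (M ⊓ N) M hM
    have hB : IsClosed ((ominus N M : Submodule ℂ H) : Set H) := by
      rw [hBeq]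
      exact isClosed_inf_orth (M ⊓ N) N hN
    have hAne : ominus M N ≠ ⊥ := ominus_ne_bot' hM hN hMN'
    have hBne : ominus N M ≠ ⊥ := by
      show N ⊓ (N ⊓ M)ᗮ ≠ ⊥
      exact ominus_ne_bot' hN hM hNM'
    have hTeq : sproj M ∘L sproj N - sproj (M ⊓ N)
        = sproj (ominus M N) ∘L sproj (ominus N M) := by
      ext x
      simp only [ContinuousLinearMap.coe_sub', Pi.sub_apply,
        ContinuousLinearMap.coe_comp', Function.comp_apply]
      rw [hBeq]
      have h1 : sproj N x = sproj (M ⊓ N) x + sproj (N ⊓ (M ⊓ N)ᗮ) x :=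
        sproj_add hMNc hN inf_le_right x
      rw [h1, map_add, sproj_eq_self hM ((inf_le_left : M ⊓ N ≤ M) (sproj_mem hMNc x)),
        add_sub_cancel_left]
      have h2 : sproj M (sproj (N ⊓ (M ⊓ N)ᗮ) x)
          = sproj (M ⊓ N) (sproj (N ⊓ (M ⊓ N)ᗮ) x)
            + sproj (M ⊓ (M ⊓ N)ᗮ) (sproj (N ⊓ (M ⊓ N)ᗮ) x) :=
        sproj_add hMNc hM inf_le_left _
      have h3 : sproj (M ⊓ N) (sproj (N ⊓ (M ⊓ N)ᗮ) x) = 0 :=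
        sproj_eq_zero_of_orthogonal hMNc
          ((inf_le_right : N ⊓ (M ⊓ N)ᗮ ≤ (M ⊓ N)ᗮ) (sproj_mem (isClosed_inf_orth (M ⊓ N) N hN) x))
      rw [h2, h3, zero_add]
      rfl
    rw [hTeq]
    exact norm_sproj_comp hA hB hAne hBne

end
end

section
/- For closed subspaces M, N of a Hilbert space, c[M,N] = c[M^⊥, N^⊥], where c is the cosine of the Friedrichs angle. -/
noncomputable section

open scoped InnerProductSpace ENNReal

variable {H K : Type*} [NormedAddCommGroup H] [InnerProductSpace ℂ H] [CompleteSpace H]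
  [NormedAddCommGroup K] [InnerProductSpace ℂ K] [CompleteSpace K]

variable {I : Type*}

section AuxAngle

open scoped ComplexConjugate

variable {H' : Type*} [NormedAddCommGroup H'] [InnerProductSpace ℂ H'] [CompleteSpace H']

private lemma angleCos_nonneg' (M N : Submodule ℂ H') : 0 ≤ angleCos M N := by
  unfold angleCos
  split
  · exact le_rfl
  · exact Real.sSup_nonneg fun r hr => by
      obtain ⟨x, _, y, _, _, _, rfl⟩ := hr
      exact norm_nonneg _

private lemma angleCos_le_one' (M N : Submodule ℂ H') : angleCos M N ≤ 1 := by
  unfold angleCos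
  split
  · exact zero_le_one
  · refine Real.sSup_le (fun r hr => ?_) zero_le_one
    obtain ⟨x, _, y, _, hx1, hy1, rfl⟩ := hr
    calc ‖(inner ℂ x y : ℂ)‖ ≤ ‖x‖ * ‖y‖ := norm_inner_le_norm x y
    _ = 1 := by rw [hx1, hy1, one_mul]

private lemma bddAbove_angle_set (M N : Submodule ℂ H') :
    BddAbove {r : ℝ | ∃ x ∈ ominus M N, ∃ y ∈ ominus N M,
      ‖x‖ = 1 ∧ ‖y‖ = 1 ∧ r = ‖(inner ℂ x y : ℂ)‖} := by
  refine ⟨1, fun r hr => ?_⟩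
  obtain ⟨x, _, y, _, hx1, hy1, rfl⟩ := hr
  calc ‖(inner ℂ x y : ℂ)‖ ≤ ‖x‖ * ‖y‖ := norm_inner_le_norm x y
  _ = 1 := by rw [hx1, hy1, one_mul]

private lemma inner_le_angleCos (M N : Submodule ℂ H') {x y : H'}
    (hx : x ∈ ominus M N) (hy : y ∈ ominus N M) :
    ‖(inner ℂ x y : ℂ)‖ ≤ angleCos M N * (‖x‖ * ‖y‖) := by
  rw [ominus, Submodule.mem_inf] at hx hy
  by_cases hd : M ≤ N ∨ N ≤ M
  · rcases hd with h | h
    · have hMN : M ⊓ N = M := inf_eq_left.mpr h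
      have : x = 0 := by
        have : x ∈ M ⊓ Mᗮ := Submodule.mem_inf.mpr ⟨hx.1, hMN ▸ hx.2⟩
        rwa [Submodule.inf_orthogonal_eq_bot, Submodule.mem_bot] at this
      rw [this, inner_zero_left, norm_zero]
      have := angleCos_nonneg' M N
      positivity
    · have hMN : N ⊓ M = N := inf_eq_left.mpr h
      have : y = 0 := by
        have : y ∈ N ⊓ Nᗮ := Submodule.mem_inf.mpr ⟨hy.1, hMN ▸ hy.2⟩
        rwa [Submodule.inf_orthogonal_eq_bot, Submodule.mem_bot] at this
      rw [this, inner_zero_right, norm_zero]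
      have := angleCos_nonneg' M N
      positivity
  · by_cases hx0 : x = 0
    · rw [hx0, inner_zero_left, norm_zero]
      have := angleCos_nonneg' M N
      positivity
    by_cases hy0 : y = 0
    · rw [hy0, inner_zero_right, norm_zero]
      have := angleCos_nonneg' M N
      positivity
    have hxn : (0:ℝ) < ‖x‖ := norm_pos_iff.mpr hx0
    have hyn : (0:ℝ) < ‖y‖ := norm_pos_iff.mpr hy0
    set xh : H' := ((‖x‖⁻¹ : ℝ) : ℂ) • x with hxh
    set yh : H' := ((‖y‖⁻¹ : ℝ) : ℂ) • y with hyh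
    have hxhm : xh ∈ ominus M N := Submodule.smul_mem _ _ (Submodule.mem_inf.mpr hx)
    have hyhm : yh ∈ ominus N M := Submodule.smul_mem _ _ (Submodule.mem_inf.mpr hy)
    have hxh1 : ‖xh‖ = 1 := by
      rw [hxh, norm_smul, Complex.norm_real, Real.norm_eq_abs,
        abs_of_pos (inv_pos.mpr hxn), inv_mul_cancel₀ hxn.ne']
    have hyh1 : ‖yh‖ = 1 := by
      rw [hyh, norm_smul, Complex.norm_real, Real.norm_eq_abs,
        abs_of_pos (inv_pos.mpr hyn), inv_mul_cancel₀ hyn.ne']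
    have hinner : ‖(inner ℂ xh yh : ℂ)‖ = ‖x‖⁻¹ * ‖y‖⁻¹ * ‖(inner ℂ x y : ℂ)‖ := by
      rw [hxh, hyh, inner_smul_left, inner_smul_right, Complex.conj_ofReal]
      rw [norm_mul, norm_mul, Complex.norm_real, Complex.norm_real, Real.norm_eq_abs,
        Real.norm_eq_abs, abs_of_pos (inv_pos.mpr hxn), abs_of_pos (inv_pos.mpr hyn)]
      ring
    have hmem : ‖(inner ℂ xh yh : ℂ)‖ ∈ {r : ℝ | ∃ x ∈ ominus M N, ∃ y ∈ ominus N M,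
        ‖x‖ = 1 ∧ ‖y‖ = 1 ∧ r = ‖(inner ℂ x y : ℂ)‖} :=
      ⟨xh, hxhm, yh, hyhm, hxh1, hyh1, rfl⟩
    have hle : ‖(inner ℂ xh yh : ℂ)‖ ≤ angleCos M N := by
      unfold angleCos
      rw [if_neg hd]
      exact le_csSup (bddAbove_angle_set M N) hmem
    rw [hinner] at hle
    have := mul_le_mul_of_nonneg_left hle (by positivity : (0:ℝ) ≤ ‖x‖ * ‖y‖)
    calc ‖(inner ℂ x y : ℂ)‖ = ‖x‖ * ‖y‖ * (‖x‖⁻¹ * ‖y‖⁻¹ * ‖(inner ℂ x y : ℂ)‖) := by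
          field_simp
    _ ≤ ‖x‖ * ‖y‖ * angleCos M N := this
    _ = angleCos M N * (‖x‖ * ‖y‖) := by ring

private lemma angleCos_orth_le (M N : Submodule ℂ H')
    (hM : IsClosed (M : Set H')) (hN : IsClosed (N : Set H')) :
    angleCos Mᗮ Nᗮ ≤ angleCos M N := by
  haveI : CompleteSpace M := hM.completeSpace_coe
  haveI : CompleteSpace N := hN.completeSpace_coe
  haveI : CompleteSpace (M ⊓ N : Submodule ℂ H') := (hM.inter hN).completeSpace_coe
  by_cases hd : M ≤ N ∨ N ≤ M
  · have hd' : Mᗮ ≤ Nᗮ ∨ Nᗮ ≤ Mᗮ :=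
      hd.symm.imp Submodule.orthogonal_le Submodule.orthogonal_le
    unfold angleCos
    rw [if_pos hd', if_pos hd]
  · have hd' : ¬ (Mᗮ ≤ Nᗮ ∨ Nᗮ ≤ Mᗮ) := by
      rintro (h | h)
      · refine hd (Or.inr ?_)
        have := Submodule.orthogonal_le h
        rwa [Submodule.orthogonal_orthogonal, Submodule.orthogonal_orthogonal] at this
      · refine hd (Or.inl ?_)
        have := Submodule.orthogonal_le h
        rwa [Submodule.orthogonal_orthogonal, Submodule.orthogonal_orthogonal] at this
    have hc0 : 0 ≤ angleCos M N := angleCos_nonneg' M N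
    have hc1 : angleCos M N ≤ 1 := angleCos_le_one' M N
    set c : ℝ := angleCos M N with hc
    conv_lhs => rw [angleCos]
    rw [if_neg hd']
    refine Real.sSup_le (fun r hr => ?_) hc0
    obtain ⟨u, hu, v, hv, hu1, hv1, rfl⟩ := hr
    rw [ominus, Submodule.mem_inf] at hu hv
    obtain ⟨huM, huO⟩ := hu
    have hvN : v ∈ Nᗮ := hv.1
    by_cases hcc : 1 ≤ c
    · calc ‖(inner ℂ u v : ℂ)‖ ≤ ‖u‖ * ‖v‖ := norm_inner_le_norm u v
      _ = 1 := by rw [hu1, hv1, one_mul]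
      _ ≤ c := hcc
    · push_neg at hcc
      have hs0 : (0:ℝ) < 1 - c ^ 2 := by nlinarith
      set s : ℝ := Real.sqrt (1 - c ^ 2) with hsdef
      have hspos : 0 < s := Real.sqrt_pos.mpr hs0
      have hssq : s ^ 2 = 1 - c ^ 2 := Real.sq_sqrt hs0.le
      -- decompose u along N
      obtain ⟨a, haN, b, hbN, hab⟩ := N.exists_add_mem_mem_orthogonal u
      -- key: for all w in M ⊔ N, |⟨u,w⟩| ≤ (‖a‖/s) ‖w‖
      have key1 : ∀ w ∈ (M ⊔ N : Submodule ℂ H'), ‖(inner ℂ u w : ℂ)‖ ≤ (‖a‖ / s) * ‖w‖ := by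
        intro w hw
        obtain ⟨m, hm, n, hn, rfl⟩ := Submodule.mem_sup.mp hw
        obtain ⟨zm, hzm, x, hx, hmx⟩ := (M ⊓ N).exists_add_mem_mem_orthogonal m
        obtain ⟨zn, hzn, y, hy, hny⟩ := (M ⊓ N).exists_add_mem_mem_orthogonal n
        have hxM : x ∈ M := by
          have : x = m - zm := by rw [hmx]; abel
          rw [this]; exact Submodule.sub_mem _ hm hzm.1
        have hyN : y ∈ N := by
          have : y = n - zn := by rw [hny]; abel
          rw [this]; exact Submodule.sub_mem _ hn hzn.2
        have hxo : x ∈ ominus M N := Submodule.mem_inf.mpr ⟨hxM, hx⟩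
        have hyo : y ∈ ominus N M := Submodule.mem_inf.mpr ⟨hyN, by rw [inf_comm]; exact hy⟩
        -- inner u (m + n) = inner a y
        have huM' : ∀ z ∈ M, (inner ℂ u z : ℂ) = 0 := (Submodule.mem_orthogonal' M u).mp huM
        have hbN' : ∀ z ∈ N, (inner ℂ b z : ℂ) = 0 := (Submodule.mem_orthogonal' N b).mp hbN
        have hinner_eq : (inner ℂ u (m + n) : ℂ) = inner ℂ a y := by
          rw [inner_add_right, huM' m hm, zero_add, hny, inner_add_right,
            huM' zn hzn.1, zero_add, hab, inner_add_left, hbN' y hyN, add_zero]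
        -- norm bounds
        have hCS : ‖(inner ℂ x y : ℂ)‖ ≤ c * (‖x‖ * ‖y‖) := inner_le_angleCos M N hxo hyo
        have hre : -(c * (‖x‖ * ‖y‖)) ≤ (inner ℂ x y : ℂ).re := by
          have h1 : |(inner ℂ x y : ℂ).re| ≤ ‖(inner ℂ x y : ℂ)‖ := Complex.abs_re_le_norm _
          have := (abs_le.mp (h1.trans hCS)).1
          linarith
        have hxy_sq : (1 - c ^ 2) * ‖y‖ ^ 2 ≤ ‖x + y‖ ^ 2 := by
          have hexp : ‖x + y‖ ^ 2 = ‖x‖ ^ 2 + 2 * (inner ℂ x y : ℂ).re + ‖y‖ ^ 2 := by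
            have := @norm_add_sq ℂ _ _ _ _ x y
            simpa using this
          nlinarith [sq_nonneg (‖x‖ - c * ‖y‖), norm_nonneg x, norm_nonneg y]
        have horth : (inner ℂ (zm + zn) (x + y) : ℂ) = 0 := by
          have h1 : x + y ∈ (M ⊓ N)ᗮ := Submodule.add_mem _ hx hy
          exact h1 (zm + zn) (Submodule.add_mem _ hzm hzn)
        have hw_sq : ‖x + y‖ ^ 2 ≤ ‖m + n‖ ^ 2 := by
          have hsum : m + n = (zm + zn) + (x + y) := by rw [hmx, hny]; abel
          rw [hsum]
          nlinarith [norm_add_sq_eq_norm_sq_add_norm_sq_of_inner_eq_zero _ _ horth,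
            sq_nonneg ‖zm + zn‖]
        have hy_le : s * ‖y‖ ≤ ‖m + n‖ := by
          have h1 : (s * ‖y‖) ^ 2 ≤ ‖m + n‖ ^ 2 := by
            rw [mul_pow, hssq]; exact hxy_sq.trans hw_sq
          nlinarith [norm_nonneg (m + n), mul_nonneg hspos.le (norm_nonneg y)]
        calc ‖(inner ℂ u (m + n) : ℂ)‖ = ‖(inner ℂ a y : ℂ)‖ := by rw [hinner_eq]
        _ ≤ ‖a‖ * ‖y‖ := norm_inner_le_norm a y
        _ ≤ (‖a‖ / s) * ‖m + n‖ := by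
            rw [div_mul_eq_mul_div, le_div_iff₀ hspos]
            calc ‖a‖ * ‖y‖ * s = ‖a‖ * (s * ‖y‖) := by ring
            _ ≤ ‖a‖ * ‖m + n‖ := mul_le_mul_of_nonneg_left hy_le (norm_nonneg a)
      -- u lies in the closure of M ⊔ N
      have hucl : u ∈ closure ((M ⊔ N : Submodule ℂ H') : Set H') := by
        rw [Submodule.inf_orthogonal] at huO
        rw [Submodule.orthogonal_orthogonal_eq_closure] at huO
        rwa [← Submodule.topologicalClosure_coe]
      have key2 : 1 ≤ ‖a‖ / s := by
        have hCset : IsClosed {w : H' | ‖(inner ℂ u w : ℂ)‖ ≤ (‖a‖ / s) * ‖w‖} := by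
          apply isClosed_le
          · exact (Continuous.inner continuous_const continuous_id).norm
          · exact continuous_const.mul continuous_norm
        have hsub : ((M ⊔ N : Submodule ℂ H') : Set H') ⊆
            {w : H' | ‖(inner ℂ u w : ℂ)‖ ≤ (‖a‖ / s) * ‖w‖} := fun w hw => key1 w hw
        have := closure_minimal hsub hCset hucl
        have huu : ‖(inner ℂ u u : ℂ)‖ = 1 := by
          rw [inner_self_eq_norm_sq_to_K]
          rw [hu1]
          norm_num
        rw [Set.mem_setOf_eq, huu, hu1, mul_one] at this
        exact this
      have hsa : s ≤ ‖a‖ := (one_le_div hspos).mp key2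
      -- ‖b‖ ≤ c
      have habsq : ‖a‖ * ‖a‖ + ‖b‖ * ‖b‖ = 1 := by
        have horth : (inner ℂ a b : ℂ) = 0 := hbN a haN
        have h := norm_add_sq_eq_norm_sq_add_norm_sq_of_inner_eq_zero a b horth
        rw [← hab, hu1] at h
        linarith
      have hb_le : ‖b‖ ≤ c := by
        have hss : s * s ≤ ‖a‖ * ‖a‖ := mul_le_mul hsa hsa hspos.le (norm_nonneg a)
        nlinarith [norm_nonneg b, hssq, hc0]
      -- conclude
      have hav : (inner ℂ a v : ℂ) = 0 := hvN a haN
      calc ‖(inner ℂ u v : ℂ)‖ = ‖(inner ℂ b v : ℂ)‖ := by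
            rw [hab, inner_add_left, hav, zero_add]
      _ ≤ ‖b‖ * ‖v‖ := norm_inner_le_norm b v
      _ = ‖b‖ := by rw [hv1, mul_one]
      _ ≤ c := hb_le

end AuxAngle

theorem angleCos_orthogonal_orthogonal (M N : Submodule ℂ H)
    (hM : IsClosed (M : Set H)) (hN : IsClosed (N : Set H)) :
    angleCos M N = angleCos Mᗮ Nᗮ := by
  have h1 := angleCos_orth_le M N hM hN
  have h2 := angleCos_orth_le Mᗮ Nᗮ (Submodule.isClosed_orthogonal M) (Submodule.isClosed_orthogonal N)
  haveI : CompleteSpace M := hM.completeSpace_coe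
  haveI : CompleteSpace N := hN.completeSpace_coe
  rw [Submodule.orthogonal_orthogonal, Submodule.orthogonal_orthogonal] at h2
  exact le_antisymm h2 h1

end
end
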